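/- arXiv:2505.13710 — 3 statements merged into one kernel-verified Lean document; each statement's English description precedes it below -/
import Mathlib

section
/- For any bipartite quantum state ρ_AB on a finite-dimensional Hilbert space H_A ⊗ H_B with marginal ρ_A = Tr_B(ρ_AB), the operator inequality ρ_AB ≤ dim(H_B)² · (ρ_A ⊗ ω_B) holds, where ω_B = I_B / dim(H_B) is the maximally mixed state on H_B. -/
open Matrix Kronecker ComplexOrder

lemma dot_star_self (ι : Type) [Fintype ι] (v : ι → ℂ) :
    star v ⬝ᵥ v = ((∑ i, ‖v i‖ ^ 2 : ℝ) : ℂ) := by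
  simp only [dotProduct, Pi.star_apply]
  push_cast
  refine Finset.sum_congr rfl fun i _ => ?_
  rw [show star (v i) = (starRingEnd ℂ) (v i) from rfl,
    ← Complex.normSq_eq_conj_mul_self, Complex.normSq_eq_norm_sq]
  norm_num

lemma key_ineq {B ι : Type} [Fintype B] [Fintype ι] (w : B → ι → ℂ) :
    (∑ i, ‖(∑ b, w b) i‖ ^ 2) ≤ (Fintype.card B : ℝ) * ∑ b, ∑ i, ‖w b i‖ ^ 2 := by
  have h : ∀ i, ‖(∑ b, w b) i‖ ^ 2 ≤ (Fintype.card B : ℝ) * ∑ b, ‖w b i‖ ^ 2 := by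
    intro i
    calc ‖(∑ b, w b) i‖ ^ 2 ≤ (∑ b, ‖w b i‖) ^ 2 := by
          apply pow_le_pow_left₀ (norm_nonneg _)
          simpa using norm_sum_le Finset.univ (fun b => w b i)
      _ ≤ (Fintype.card B : ℝ) * ∑ b, ‖w b i‖ ^ 2 := by
          simpa [Finset.card_univ] using
            sq_sum_le_card_mul_sum_sq (s := Finset.univ) (f := fun b => ‖w b i‖)
  calc (∑ i, ‖(∑ b, w b) i‖ ^ 2) ≤ ∑ i, (Fintype.card B : ℝ) * ∑ b, ‖w b i‖ ^ 2 :=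
        Finset.sum_le_sum fun i _ => h i
    _ = (Fintype.card B : ℝ) * ∑ b, ∑ i, ‖w b i‖ ^ 2 := by
        rw [← Finset.mul_sum, Finset.sum_comm]

/-- For any bipartite quantum state ρ_AB on H_A ⊗ H_B with marginal
ρ_A = Tr_B(ρ_AB), we have ρ_AB ≤ dim(H_B)² · (ρ_A ⊗ ω_B), where ω_B = I/dim(H_B). -/
theorem stmt_0 {A B : Type} [Fintype A] [Fintype B] [DecidableEq A] [DecidableEq B]
    (ρ : Matrix (A × B) (A × B) ℂ) (hρ : ρ.PosSemidef) (htr : (ρ.trace).re ≤ 1) :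
    ((((Fintype.card B : ℂ)) ^ 2 •
        ((Matrix.of fun a a' => ∑ b, ρ (a, b) (a', b)) ⊗ₖ
          (((Fintype.card B : ℂ))⁻¹ • (1 : Matrix B B ℂ)))) - ρ).PosSemidef := by
  by_cases hB : Fintype.card B = 0
  · have hE : IsEmpty B := Fintype.card_eq_zero_iff.mp hB
    refine Matrix.PosSemidef.of_dotProduct_mulVec_nonneg ?_ ?_
    · apply Matrix.IsHermitian.ext
      rintro ⟨a, b⟩ _
      exact hE.elim b
    · intro x
      simp [dotProduct, Finset.univ_eq_empty]
  set ρA : Matrix A A ℂ := Matrix.of fun a a' => ∑ b, ρ (a, b) (a', b) with hρA_def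
  have hc : (Fintype.card B : ℂ) ≠ 0 := Nat.cast_ne_zero.mpr hB
  have hrw : ((Fintype.card B : ℂ)) ^ 2 • (ρA ⊗ₖ ((Fintype.card B : ℂ)⁻¹ • (1 : Matrix B B ℂ)))
      = (Fintype.card B : ℂ) • (ρA ⊗ₖ 1) := by
    rw [Matrix.kronecker_smul, smul_smul]
    congr 1
    field_simp
  rw [hrw]
  have hρA : ρA.IsHermitian := by
    apply Matrix.IsHermitian.ext
    intro a a'
    simp only [hρA_def, Matrix.of_apply, star_sum]
    exact Finset.sum_congr rfl fun b _ => hρ.1.apply (a, b) (a', b)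
  obtain ⟨N, hN⟩ : ∃ N : Matrix (A × B) (A × B) ℂ, ρ = Nᴴ * N := by
    open scoped MatrixOrder in
    exact CStarAlgebra.nonneg_iff_eq_star_mul_self.mp hρ.nonneg
  refine Matrix.PosSemidef.of_dotProduct_mulVec_nonneg ?_ ?_
  · apply Matrix.IsHermitian.ext
    rintro ⟨a, b⟩ ⟨a', b'⟩
    simp only [Matrix.sub_apply, Matrix.smul_apply, Matrix.kroneckerMap_apply,
      Matrix.one_apply, star_sub, star_mul', smul_eq_mul]
    rw [hρ.1.apply (a, b) (a', b'), hρA.apply a a', star_natCast]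
    simp [apply_ite (star : ℂ → ℂ), eq_comm, mul_comm]
  · intro x
    set y : B → B → (A × B → ℂ) := fun b c p => if p.2 = c then x (p.1, b) else 0 with hy
    have x_eq : x = ∑ b, y b b := by
      funext p
      simp only [Finset.sum_apply, hy]
      rw [Finset.sum_ite_eq Finset.univ p.2 (fun b => x (p.1, b))]
      simp
    have dρ : ∀ v : A × B → ℂ, star v ⬝ᵥ ρ *ᵥ v = star (N *ᵥ v) ⬝ᵥ (N *ᵥ v) := by
      intro v
      rw [hN, ← Matrix.mulVec_mulVec, Matrix.dotProduct_mulVec, Matrix.vecMul_conjTranspose,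
        star_star]
    have dK : star x ⬝ᵥ ((ρA ⊗ₖ (1 : Matrix B B ℂ)) *ᵥ x)
        = ∑ b, ∑ c, star (y b c) ⬝ᵥ ρ *ᵥ (y b c) := by
      simp only [dotProduct, Matrix.mulVec, Matrix.kroneckerMap_apply, Matrix.one_apply,
        hρA_def, Matrix.of_apply, Pi.star_apply, hy, Fintype.sum_prod_type,
        apply_ite (star : ℂ → ℂ), star_zero, mul_ite, ite_mul, mul_one, mul_zero, zero_mul,
        Finset.sum_ite_eq, Finset.sum_ite_eq', Finset.mem_univ, if_true,
        Finset.mul_sum, Finset.sum_mul]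
      have swap : ∀ b c : B, ∀ a : A,
          (∑ d : B, ∑ a' : A, if d = c then star (x (a, b)) * (ρ (a, d) (a', c) * x (a', b)) else 0)
          = ∑ a' : A, star (x (a, b)) * (ρ (a, c) (a', c) * x (a', b)) := by
        intro b c a
        rw [Finset.sum_comm]
        refine Finset.sum_congr rfl fun a' _ => ?_
        simp
      simp only [swap]
      rw [Finset.sum_comm]
      refine Finset.sum_congr rfl fun b _ => ?_
      rw [show (∑ a : A, ∑ a' : A, ∑ c : B,
            star (x (a, b)) * (ρ (a, c) (a', c) * x (a', b)))
          = ∑ a : A, ∑ c : B, ∑ a' : A,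
            star (x (a, b)) * (ρ (a, c) (a', c) * x (a', b)) from
        Finset.sum_congr rfl fun a _ => Finset.sum_comm, Finset.sum_comm]
    have hNx : N *ᵥ x = ∑ b, N *ᵥ y b b := by
      rw [x_eq]
      simpa only [Matrix.mulVecLin_apply] using
        map_sum (Matrix.mulVecLin N) (fun b => y b b) Finset.univ
    rw [Matrix.sub_mulVec, dotProduct_sub, Matrix.smul_mulVec, dotProduct_smul,
      smul_eq_mul, dK, dρ, hNx]
    have hrw2 : ∀ b c, star (y b c) ⬝ᵥ ρ *ᵥ (y b c)
        = ((∑ i, ‖(N *ᵥ y b c) i‖ ^ 2 : ℝ) : ℂ) := fun b c => by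
      rw [dρ, dot_star_self]
    simp only [hrw2, dot_star_self]
    rw [show ((Fintype.card B : ℂ)) = (((Fintype.card B : ℕ) : ℝ) : ℂ) by push_cast; rfl]
    simp only [← Complex.ofReal_sum]
    rw [← Complex.ofReal_mul, ← Complex.ofReal_sub, ← Complex.ofReal_zero, Complex.real_le_real]
    rw [sub_nonneg]
    calc (∑ i, ‖(∑ b, N *ᵥ y b b) i‖ ^ 2)
        ≤ (Fintype.card B : ℝ) * ∑ b, ∑ i, ‖(N *ᵥ y b b) i‖ ^ 2 :=
          key_ineq (fun b => N *ᵥ y b b)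
      _ ≤ (Fintype.card B : ℝ) * ∑ b, ∑ c, ∑ i, ‖(N *ᵥ y b c) i‖ ^ 2 := by
          refine mul_le_mul_of_nonneg_left ?_ (Nat.cast_nonneg _)
          refine Finset.sum_le_sum fun b _ => ?_
          exact Finset.single_le_sum (f := fun c => ∑ i, ‖(N *ᵥ y b c) i‖ ^ 2)
            (fun c _ => by positivity) (Finset.mem_univ b)
end

section
/- (Min-entropy leakage chain rule, cq version, unsmoothed.) Let ρ_XBC be a state classical on X with dim(H_C) = 2^ℓ, and define the guessing-probability min-entropy H_min(X|·) = −log of the optimal guessing probability over all POVMs. Then H_min(X|BC)_ρ ≥ H_min(X|B)_ρ − 2ℓ. -/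
open Matrix ComplexOrder

namespace Stmt7

set_option linter.unusedSectionVars false

variable {n B C : Type} [Fintype n] [DecidableEq n] [Fintype B] [Fintype C]
  [DecidableEq B] [DecidableEq C]

section SqrtPort
open scoped MatrixOrder

noncomputable def _root_.Matrix.PosSemidef.sqrt {M : Matrix n n ℂ} (_hM : M.PosSemidef) :
    Matrix n n ℂ := CFC.sqrt M

lemma _root_.Matrix.PosSemidef.sqrt_mul_self {M : Matrix n n ℂ} (hM : M.PosSemidef) :
    hM.sqrt * hM.sqrt = M :=
  CFC.sqrt_mul_sqrt_self M (Matrix.nonneg_iff_posSemidef.mpr hM)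

lemma _root_.Matrix.PosSemidef.posSemidef_sqrt {M : Matrix n n ℂ} (hM : M.PosSemidef) :
    hM.sqrt.PosSemidef :=
  Matrix.nonneg_iff_posSemidef.mp (CFC.sqrt_nonneg M)

end SqrtPort

lemma trace_nonneg' {M : Matrix n n ℂ} (hM : M.PosSemidef) : 0 ≤ M.trace := by
  rw [Matrix.trace]
  refine Finset.sum_nonneg fun i _ => ?_
  have := hM.dotProduct_mulVec_nonneg (Pi.single i 1)
  simpa [dotProduct, Matrix.mulVec, Pi.single_apply, Finset.sum_ite_eq',
    apply_ite, mul_ite, ite_mul] using this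

lemma trace_mul_nonneg' {A M : Matrix n n ℂ} (hA : A.PosSemidef) (hM : M.PosSemidef) :
    0 ≤ (A * M).trace := by
  have h2 : (A * M).trace = (hM.sqrt * A * hM.sqrt).trace := by
    conv_lhs => rw [← hM.sqrt_mul_self]
    rw [← Matrix.mul_assoc, Matrix.trace_mul_cycle]
  rw [h2]
  refine trace_nonneg' ?_
  have := hA.mul_mul_conjTranspose_same hM.sqrt
  simpa [hM.posSemidef_sqrt.1.eq] using this

lemma smul_psd (c : ℂ) (hc : 0 ≤ c) {M : Matrix n n ℂ} (hM : M.PosSemidef) :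
    (c • M).PosSemidef := by
  have hcs : star c = c := by
    rw [Complex.star_def, Complex.conj_eq_iff_im]
    exact ((Complex.le_def.mp hc).2).symm
  refine Matrix.PosSemidef.of_dotProduct_mulVec_nonneg ?_ ?_
  · rw [IsHermitian, conjTranspose_smul, hcs, hM.1.eq]
  · intro v
    rw [Matrix.smul_mulVec, dotProduct_smul, smul_eq_mul]
    exact mul_nonneg hc (hM.dotProduct_mulVec_nonneg v)

lemma psd_sum {X : Type} (s : Finset X) (F : X → Matrix n n ℂ)
    (h : ∀ x ∈ s, (F x).PosSemidef) : (∑ x ∈ s, F x).PosSemidef := by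
  classical
  induction s using Finset.induction_on with
  | empty => simpa using Matrix.PosSemidef.zero
  | insert _ _ hx ih =>
    rw [Finset.sum_insert hx]
    exact ((h _ (Finset.mem_insert_self _ _)).add
      (ih fun x hxs => h x (Finset.mem_insert_of_mem hxs)))

noncomputable def marg (M : Matrix (B × C) (B × C) ℂ) : Matrix B B ℂ :=
  Matrix.of fun b b' => ∑ c, M (b, c) (b', c)

noncomputable def tens (σ : Matrix B B ℂ) : Matrix (B × C) (B × C) ℂ :=
  Matrix.of fun p q => if p.2 = q.2 then σ p.1 q.1 else 0

def emb (w : B → ℂ) (c : C) : B × C → ℂ := fun q => if q.2 = c then w q.1 else 0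

lemma qf_emb (M : Matrix (B × C) (B × C) ℂ) (w : B → ℂ) (e : C) :
    star (emb w e) ⬝ᵥ (M *ᵥ emb w e) =
      ∑ b, ∑ b', (starRingEnd ℂ) (w b) * (M (b, e) (b', e) * w b') := by
  simp only [dotProduct, Matrix.mulVec, emb, Pi.star_apply, Fintype.sum_prod_type,
    apply_ite, mul_ite, ite_mul, star_zero, zero_mul, mul_zero, Finset.sum_ite_eq',
    Finset.mem_univ, if_true, Complex.star_def]
  exact Finset.sum_congr rfl fun b _ => Finset.mul_sum _ _ _

lemma qf_marg (M : Matrix (B × C) (B × C) ℂ) (w : B → ℂ) :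
    star w ⬝ᵥ (marg M *ᵥ w) = ∑ c, star (emb w c) ⬝ᵥ (M *ᵥ emb w c) := by
  simp only [qf_emb]
  simp only [dotProduct, Matrix.mulVec, marg, Matrix.of_apply,
    Pi.star_apply, Complex.star_def, Finset.mul_sum, Finset.sum_mul]
  rw [show (∑ c, ∑ b, ∑ b', (starRingEnd ℂ) (w b) * (M (b, c) (b', c) * w b')) =
      ∑ b, ∑ c, ∑ b', (starRingEnd ℂ) (w b) * (M (b, c) (b', c) * w b') from
    Finset.sum_comm]
  refine Finset.sum_congr rfl fun b _ => ?_
  rw [show (∑ c, ∑ b', (starRingEnd ℂ) (w b) * (M (b, c) (b', c) * w b')) =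
      ∑ b', ∑ c, (starRingEnd ℂ) (w b) * (M (b, c) (b', c) * w b') from Finset.sum_comm]

lemma marg_psd {M : Matrix (B × C) (B × C) ℂ} (hM : M.PosSemidef) : (marg M).PosSemidef := by
  refine Matrix.PosSemidef.of_dotProduct_mulVec_nonneg ?_ ?_
  · ext b b'
    simp only [conjTranspose_apply, marg, Matrix.of_apply, star_sum]
    exact Finset.sum_congr rfl fun c _ => hM.1.apply (b, c) (b', c)
  · intro w
    rw [qf_marg]
    exact Finset.sum_nonneg fun c _ => hM.dotProduct_mulVec_nonneg (emb w c)

lemma marg_trace (M : Matrix (B × C) (B × C) ℂ) : (marg M).trace = M.trace := by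
  simp [Matrix.trace, marg, Matrix.diag, Fintype.sum_prod_type]

lemma marg_one : marg (1 : Matrix (B × C) (B × C) ℂ) = (Fintype.card C : ℂ) • 1 := by
  ext b b'
  simp [marg, Matrix.one_apply, Prod.ext_iff, Finset.sum_ite_eq', Finset.card_univ]

lemma marg_sum {X : Type} [Fintype X] (F : X → Matrix (B × C) (B × C) ℂ) :
    marg (∑ x, F x) = ∑ x, marg (F x) := by
  ext b b'
  simp [marg, Matrix.sum_apply]
  rw [Finset.sum_comm]

lemma trace_tens (F : Matrix (B × C) (B × C) ℂ) (σ : Matrix B B ℂ) :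
    (F * tens σ).trace = (marg F * σ).trace := by
  simp only [Matrix.trace, Matrix.diag, Matrix.mul_apply, marg, tens, Matrix.of_apply,
    Fintype.sum_prod_type, mul_ite, mul_zero, Finset.sum_ite_eq', Finset.mem_univ, if_true,
    Finset.sum_mul]
  exact Finset.sum_congr rfl fun b _ => Finset.sum_comm

lemma dot_pair (u u' : n → ℂ) :
    star u ⬝ᵥ u' + star u' ⬝ᵥ u ≤ star u ⬝ᵥ u + star u' ⬝ᵥ u' := by
  have h := dotProduct_star_self_nonneg (u - u')
  rw [← sub_nonneg]
  convert h using 1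
  simp only [star_sub, sub_dotProduct, dotProduct_sub]
  ring

lemma sum_dot {ι : Type} [Fintype ι] (f : ι → n → ℂ) (G : n → ℂ) :
    star (∑ c, f c) ⬝ᵥ G = ∑ c, star (f c) ⬝ᵥ G := by
  simp only [dotProduct, star_sum, Finset.sum_apply, Pi.star_apply, Finset.sum_mul]
  exact Finset.sum_comm

lemma dot_sum {ι : Type} [Fintype ι] (F : n → ℂ) (g : ι → n → ℂ) :
    star F ⬝ᵥ (∑ c, g c) = ∑ c, star F ⬝ᵥ g c := by
  simp only [dotProduct, Finset.sum_apply, Pi.star_apply, Finset.mul_sum]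
  exact Finset.sum_comm

lemma dot_sum_sum {ι : Type} [Fintype ι] (f g : ι → n → ℂ) :
    star (∑ c, f c) ⬝ᵥ (∑ c, g c) = ∑ c, ∑ c', star (f c) ⬝ᵥ g c' := by
  rw [sum_dot]
  exact Finset.sum_congr rfl fun c _ => dot_sum _ _

lemma two_cancel {a b : ℂ} (h : 2 * a ≤ 2 * b) : a ≤ b := by
  rw [Complex.le_def] at h ⊢
  obtain ⟨h1, h2⟩ := h
  have r2 : Complex.re 2 = 2 := by norm_num
  have i2 : Complex.im 2 = 0 := by norm_num
  simp only [Complex.mul_re, Complex.mul_im, r2, i2] at h1 h2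
  constructor <;> linarith

lemma cs_ineq {ι : Type} [Fintype ι] (w : ι → n → ℂ) :
    star (∑ c, w c) ⬝ᵥ (∑ c, w c) ≤ (Fintype.card ι : ℂ) * ∑ c, star (w c) ⬝ᵥ (w c) := by
  refine two_cancel ?_
  have h1 : (2 : ℂ) * (star (∑ c, w c) ⬝ᵥ (∑ c, w c)) =
      ∑ c, ∑ c', (star (w c) ⬝ᵥ w c' + star (w c') ⬝ᵥ w c) := by
    rw [dot_sum_sum, two_mul]
    simp only [Finset.sum_add_distrib]
    congr 1
    exact Finset.sum_comm
  rw [h1]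
  have h2 : ∑ c, ∑ c', (star (w c) ⬝ᵥ w c' + star (w c') ⬝ᵥ w c) ≤
      ∑ c, ∑ c', (star (w c) ⬝ᵥ w c + star (w c') ⬝ᵥ w c') :=
    Finset.sum_le_sum fun c _ => Finset.sum_le_sum fun c' _ => dot_pair (w c) (w c')
  refine h2.trans_eq ?_
  simp only [Finset.sum_add_distrib, Finset.sum_const, Finset.card_univ, nsmul_eq_mul,
    ← Finset.mul_sum]
  ring

lemma qf_sqrt {M : Matrix n n ℂ} (hM : M.PosSemidef) (u : n → ℂ) :
    star u ⬝ᵥ (M *ᵥ u) = star (hM.sqrt *ᵥ u) ⬝ᵥ (hM.sqrt *ᵥ u) := by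
  rw [star_mulVec, hM.posSemidef_sqrt.1.eq]
  rw [← Matrix.dotProduct_mulVec, Matrix.mulVec_mulVec, hM.sqrt_mul_self]

lemma mulVec_sum' {ι : Type} [Fintype ι] (A : Matrix n n ℂ) (f : ι → n → ℂ) :
    A *ᵥ (∑ c, f c) = ∑ c, A *ᵥ f c := by
  have := map_sum A.mulVecLin f Finset.univ
  simpa only [Matrix.mulVecLin_apply] using this

lemma sum_shift (v : B × C → ℂ) : (∑ c, emb (fun b => v (b, c)) c) = v := by
  funext q
  simp only [Finset.sum_apply, emb]
  rw [Finset.sum_ite_eq (Finset.univ) q.2 (fun c => v (q.1, c))]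
  simp

lemma qf_tens (M : Matrix (B × C) (B × C) ℂ) (v : B × C → ℂ) :
    star v ⬝ᵥ (tens (marg M) *ᵥ v) =
      ∑ c, ∑ e, star (emb (fun b => v (b, c)) e) ⬝ᵥ (M *ᵥ emb (fun b => v (b, c)) e) := by
  simp only [qf_emb]
  simp only [dotProduct, Matrix.mulVec, tens, marg, Matrix.of_apply, Pi.star_apply,
    Fintype.sum_prod_type, mul_ite, ite_mul, mul_zero, zero_mul, Finset.sum_ite_eq',
    Finset.mem_univ, if_true, Complex.star_def, Finset.mul_sum, Finset.sum_mul,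
    Finset.sum_ite_eq]
  calc (∑ b : B, ∑ c : C, ∑ b' : B, ∑ e : C,
          (starRingEnd ℂ) (v (b, c)) * (M (b, e) (b', e) * v (b', c)))
      = ∑ c : C, ∑ b : B, ∑ b' : B, ∑ e : C,
          (starRingEnd ℂ) (v (b, c)) * (M (b, e) (b', e) * v (b', c)) := Finset.sum_comm
    _ = ∑ c : C, ∑ b : B, ∑ e : C, ∑ b' : B,
          (starRingEnd ℂ) (v (b, c)) * (M (b, e) (b', e) * v (b', c)) :=
        Finset.sum_congr rfl fun c _ => Finset.sum_congr rfl fun b _ => Finset.sum_comm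
    _ = ∑ c : C, ∑ e : C, ∑ b : B, ∑ b' : B,
          (starRingEnd ℂ) (v (b, c)) * (M (b, e) (b', e) * v (b', c)) :=
        Finset.sum_congr rfl fun c _ => Finset.sum_comm

lemma card_nonneg_c : (0 : ℂ) ≤ (Fintype.card C : ℂ) := by
  rw [show ((Fintype.card C : ℂ)) = (((Fintype.card C : ℝ)) : ℂ) by push_cast; ring]
  exact Complex.zero_le_real.2 (by positivity)

lemma qf_key {M : Matrix (B × C) (B × C) ℂ} (hM : M.PosSemidef) (v : B × C → ℂ) :
    star v ⬝ᵥ (M *ᵥ v) ≤ (Fintype.card C : ℂ) * (star v ⬝ᵥ (tens (marg M) *ᵥ v)) := by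
  set R := hM.sqrt with hR
  have hv : v = ∑ c, emb (fun b => v (b, c)) c := (sum_shift v).symm
  have step1 : star v ⬝ᵥ (M *ᵥ v) =
      star (∑ c, R *ᵥ emb (fun b => v (b, c)) c) ⬝ᵥ (∑ c, R *ᵥ emb (fun b => v (b, c)) c) := by
    rw [qf_sqrt hM v, ← mulVec_sum', ← hv]
  have step2 := cs_ineq (fun c => R *ᵥ emb (fun b => v (b, c)) c)
  have step3 : (∑ c, star (R *ᵥ emb (fun b => v (b, c)) c) ⬝ᵥ (R *ᵥ emb (fun b => v (b, c)) c))
      = ∑ c, star (emb (fun b => v (b, c)) c) ⬝ᵥ (M *ᵥ emb (fun b => v (b, c)) c) :=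
    Finset.sum_congr rfl fun c _ => (qf_sqrt hM _).symm
  have step4 : (∑ c, star (emb (fun b => v (b, c)) c) ⬝ᵥ (M *ᵥ emb (fun b => v (b, c)) c)) ≤
      ∑ c, ∑ e, star (emb (fun b => v (b, c)) e) ⬝ᵥ (M *ᵥ emb (fun b => v (b, c)) e) := by
    refine Finset.sum_le_sum fun c _ => ?_
    exact Finset.single_le_sum (f := fun e =>
      star (emb (fun b => v (b, c)) e) ⬝ᵥ (M *ᵥ emb (fun b => v (b, c)) e))
      (fun e _ => hM.dotProduct_mulVec_nonneg _) (Finset.mem_univ c)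
  calc star v ⬝ᵥ (M *ᵥ v)
      ≤ (Fintype.card C : ℂ) *
        ∑ c, star (emb (fun b => v (b, c)) c) ⬝ᵥ (M *ᵥ emb (fun b => v (b, c)) c) := by
        rw [step1, ← step3]; exact step2
    _ ≤ (Fintype.card C : ℂ) * (star v ⬝ᵥ (tens (marg M) *ᵥ v)) := by
        rw [qf_tens]
        exact mul_le_mul_of_nonneg_left step4 card_nonneg_c

lemma herm_tens {σ : Matrix B B ℂ} (hσ : σ.IsHermitian) : (tens σ : Matrix (B × C) (B × C) ℂ).IsHermitian := by
  ext p q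
  simp only [conjTranspose_apply, tens, Matrix.of_apply]
  rcases eq_or_ne p.2 q.2 with h | h
  · rw [if_pos h.symm, if_pos h]
    calc star (σ q.1 p.1) = σᴴ p.1 q.1 := rfl
      _ = σ p.1 q.1 := by rw [hσ.eq]
  · rw [if_neg (fun hh => h hh.symm), if_neg h, star_zero]

lemma psd_key {M : Matrix (B × C) (B × C) ℂ} (hM : M.PosSemidef) :
    ((Fintype.card C : ℂ) • tens (marg M) - M).PosSemidef := by
  refine Matrix.PosSemidef.of_dotProduct_mulVec_nonneg ?_ ?_
  · have hT := herm_tens (C := C) (marg_psd hM).1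
    rw [IsHermitian, conjTranspose_sub, conjTranspose_smul, hT.eq, hM.1.eq, star_natCast]
  · intro v
    rw [Matrix.sub_mulVec, dotProduct_sub, Matrix.smul_mulVec,
      dotProduct_smul, smul_eq_mul, sub_nonneg]
    exact qf_key hM v

lemma trace_bound {F M : Matrix (B × C) (B × C) ℂ} (hF : F.PosSemidef) (hM : M.PosSemidef) :
    ((F * M).trace).re ≤ (Fintype.card C : ℝ) * ((marg F * marg M).trace).re := by
  have h := trace_mul_nonneg' hF (psd_key hM)
  rw [Matrix.mul_sub, Matrix.trace_sub, Matrix.mul_smul, Matrix.trace_smul] at h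
  have hre := (Complex.le_def.mp h).1
  rw [trace_tens] at hre
  simp only [Complex.zero_re, Complex.sub_re, smul_eq_mul, Complex.mul_re,
    Complex.natCast_re, Complex.natCast_im, zero_mul, sub_zero] at hre
  linarith


lemma inv_cast_eq (n : ℕ) : ((n : ℂ))⁻¹ = (((n : ℝ)⁻¹ : ℝ) : ℂ) := by push_cast; ring

lemma inv_card_nonneg (n : ℕ) : (0 : ℂ) ≤ ((n : ℂ))⁻¹ := by
  rw [inv_cast_eq]
  exact Complex.zero_le_real.2 (by positivity)

lemma inv_card_re (n : ℕ) : ((n : ℂ))⁻¹.re = (n : ℝ)⁻¹ := by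
  rw [inv_cast_eq, Complex.ofReal_re]

lemma guess_term_le_one {X n : Type} [Fintype X] [Fintype n] [DecidableEq n]
    (F : X → Matrix n n ℂ) (hF : ∀ x, (F x).PosSemidef) (hFsum : ∑ x, F x = 1)
    (M : X → Matrix n n ℂ) (hM : ∀ x, (M x).PosSemidef) (hMtr : ∀ x, (M x).trace = 1)
    (x : X) : ((F x * M x).trace).re ≤ 1 := by
  classical
  have h1F : ((1 : Matrix n n ℂ) - F x).PosSemidef := by
    have he : (1 : Matrix n n ℂ) - F x = ∑ y ∈ Finset.univ.erase x, F y := by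
      rw [← hFsum, ← Finset.sum_erase_add Finset.univ F (Finset.mem_univ x)]
      rw [add_sub_cancel_right]
    rw [he]
    exact psd_sum _ _ fun y _ => hF y
  have h := trace_mul_nonneg' h1F (hM x)
  rw [Matrix.sub_mul, Matrix.one_mul, Matrix.trace_sub, hMtr x] at h
  have hre := (Complex.le_def.mp h).1
  simp only [Complex.zero_re, Complex.sub_re, Complex.one_re] at hre
  linarith


end Stmt7


/-- min-entropy leakage chain rule, cq version, unsmoothed:
for a state ρ_XBC classical on X with dim(H_C) = 2^ℓ, and
H_min(X|·) = −log₂ of the optimal guessing probability over POVMs,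
H_min(X|BC) ≥ H_min(X|B) − 2ℓ. -/
theorem stmt_7 {X B C : Type} [Fintype X] [Fintype B] [Fintype C]
    [DecidableEq B] [DecidableEq C]
    (p : X → ℝ) (hp : ∀ x, 0 ≤ p x) (hp1 : ∑ x, p x = 1)
    (ρ : X → Matrix (B × C) (B × C) ℂ)
    (hρ : ∀ x, (ρ x).PosSemidef) (hρtr : ∀ x, (ρ x).trace = 1)
    (ℓ : ℕ) (hC : Fintype.card C = 2 ^ ℓ) :
    -(Real.logb 2 (sSup {r : ℝ | ∃ F : X → Matrix (B × C) (B × C) ℂ,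
        (∀ x, (F x).PosSemidef) ∧ (∑ x, F x = 1) ∧
        r = ∑ x, p x * ((F x * ρ x).trace).re})) ≥
      -(Real.logb 2 (sSup {r : ℝ | ∃ F : X → Matrix B B ℂ,
        (∀ x, (F x).PosSemidef) ∧ (∑ x, F x = 1) ∧
        r = ∑ x, p x *
          ((F x * (Matrix.of fun b b' => ∑ c, ρ x (b, c) (b', c))).trace).re})) -
        2 * (ℓ : ℝ) := by
  classical
  haveI hX : Nonempty X := by
    by_contra h
    rw [not_nonempty_iff] at h
    rw [Finset.univ_eq_empty, Finset.sum_empty] at hp1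
    exact one_ne_zero hp1.symm
  set S1 : Set ℝ := {r : ℝ | ∃ F : X → Matrix (B × C) (B × C) ℂ,
        (∀ x, (F x).PosSemidef) ∧ (∑ x, F x = 1) ∧
        r = ∑ x, p x * ((F x * ρ x).trace).re} with hS1def
  set S2 : Set ℝ := {r : ℝ | ∃ F : X → Matrix B B ℂ,
        (∀ x, (F x).PosSemidef) ∧ (∑ x, F x = 1) ∧
        r = ∑ x, p x *
          ((F x * (Matrix.of fun b b' => ∑ c, ρ x (b, c) (b', c))).trace).re} with hS2def
  set nX : ℕ := Fintype.card X with hnX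
  have hnX0 : (nX : ℂ) ≠ 0 := Nat.cast_ne_zero.2 Fintype.card_ne_zero
  have hnXR : (0 : ℝ) < (nX : ℝ)⁻¹ := by
    have : (0:ℕ) < nX := Fintype.card_pos
    positivity
  -- the marginal states
  have hσ : ∀ x, (Stmt7.marg (ρ x) : Matrix B B ℂ).PosSemidef := fun x => Stmt7.marg_psd (hρ x)
  have hσtr : ∀ x, (Stmt7.marg (ρ x) : Matrix B B ℂ).trace = 1 := fun x => by
    rw [Stmt7.marg_trace, hρtr x]
  -- uniform POVM membership
  have hsumU : ∀ {m : Type} [Fintype m] [DecidableEq m],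
      (∑ _x : X, ((nX : ℂ))⁻¹ • (1 : Matrix m m ℂ)) = 1 := by
    intro m _ _
    rw [Finset.sum_const, Finset.card_univ, ← hnX, ← Nat.cast_smul_eq_nsmul ℂ, smul_smul,
      mul_inv_cancel₀ hnX0, one_smul]
  have valU : ∀ (M : X → Matrix (B × C) (B × C) ℂ), (∀ x, (M x).trace = 1) →
      (∑ x, p x * ((((nX : ℂ))⁻¹ • (1 : Matrix (B × C) (B × C) ℂ) * M x).trace).re)
        = (nX : ℝ)⁻¹ := by
    intro M hMtr
    have : ∀ x, ((((nX : ℂ))⁻¹ • (1 : Matrix (B × C) (B × C) ℂ) * M x).trace).re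
        = (nX : ℝ)⁻¹ := by
      intro x
      rw [Matrix.smul_mul, Matrix.one_mul, Matrix.trace_smul, smul_eq_mul, hMtr x, mul_one,
        Stmt7.inv_card_re]
    simp only [this, ← Finset.sum_mul, hp1, one_mul]
  have valU2 : ∀ (M : X → Matrix B B ℂ), (∀ x, (M x).trace = 1) →
      (∑ x, p x * ((((nX : ℂ))⁻¹ • (1 : Matrix B B ℂ) * M x).trace).re)
        = (nX : ℝ)⁻¹ := by
    intro M hMtr
    have : ∀ x, ((((nX : ℂ))⁻¹ • (1 : Matrix B B ℂ) * M x).trace).re = (nX : ℝ)⁻¹ := by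
      intro x
      rw [Matrix.smul_mul, Matrix.one_mul, Matrix.trace_smul, smul_eq_mul, hMtr x, mul_one,
        Stmt7.inv_card_re]
    simp only [this, ← Finset.sum_mul, hp1, one_mul]
  have mem1 : (nX : ℝ)⁻¹ ∈ S1 := by
    refine ⟨fun _ => ((nX : ℂ))⁻¹ • 1,
      fun x => Stmt7.smul_psd _ (Stmt7.inv_card_nonneg nX) Matrix.PosSemidef.one,
      hsumU, (valU ρ hρtr).symm⟩
  have mem2 : (nX : ℝ)⁻¹ ∈ S2 := by
    refine ⟨fun _ => ((nX : ℂ))⁻¹ • 1,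
      fun x => Stmt7.smul_psd _ (Stmt7.inv_card_nonneg nX) Matrix.PosSemidef.one,
      hsumU, (valU2 (fun x => Stmt7.marg (ρ x)) hσtr).symm⟩
  -- upper bounds
  have ub1 : ∀ r ∈ S1, r ≤ 1 := by
    rintro r ⟨F, hF, hFs, rfl⟩
    calc (∑ x, p x * ((F x * ρ x).trace).re) ≤ ∑ x, p x * 1 :=
        Finset.sum_le_sum fun x _ => mul_le_mul_of_nonneg_left
          (Stmt7.guess_term_le_one F hF hFs ρ hρ hρtr x) (hp x)
      _ = 1 := by simp only [mul_one, hp1]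
  have ub2 : ∀ r ∈ S2, r ≤ 1 := by
    rintro r ⟨F, hF, hFs, rfl⟩
    calc (∑ x, p x * ((F x * (Matrix.of fun b b' => ∑ c, ρ x (b, c) (b', c))).trace).re)
        ≤ ∑ x, p x * 1 :=
        Finset.sum_le_sum fun x _ => mul_le_mul_of_nonneg_left
          (Stmt7.guess_term_le_one F hF hFs (fun x => Stmt7.marg (ρ x)) hσ hσtr x) (hp x)
      _ = 1 := by simp only [mul_one, hp1]
  have hbdd1 : BddAbove S1 := ⟨1, fun r hr => ub1 r hr⟩
  have hbdd2 : BddAbove S2 := ⟨1, fun r hr => ub2 r hr⟩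
  have hne1 : S1.Nonempty := ⟨_, mem1⟩
  -- card C facts
  have hdR : (Fintype.card C : ℝ) = 2 ^ ℓ := by rw [hC]; push_cast; ring
  have hd0 : (Fintype.card C : ℂ) ≠ 0 := by
    rw [hC]; exact_mod_cast pow_ne_zero ℓ (two_ne_zero)
  have hdR0 : (Fintype.card C : ℝ) ≠ 0 := by rw [hdR]; positivity
  -- key chain-rule step
  have key4 : ∀ r ∈ S1, ∃ r' ∈ S2, r ≤ (2:ℝ) ^ (2 * ℓ) * r' := by
    rintro r ⟨F, hF, hFs, rfl⟩
    set G : X → Matrix B B ℂ := fun x => ((Fintype.card C : ℂ))⁻¹ • Stmt7.marg (F x) with hG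
    have hGpsd : ∀ x, (G x).PosSemidef := fun x =>
      Stmt7.smul_psd _ (Stmt7.inv_card_nonneg _) (Stmt7.marg_psd (hF x))
    have hGsum : ∑ x, G x = 1 := by
      rw [hG]
      rw [← Finset.smul_sum, ← Stmt7.marg_sum, hFs, Stmt7.marg_one, smul_smul,
        inv_mul_cancel₀ hd0, one_smul]
    refine ⟨∑ x, p x *
      ((G x * (Matrix.of fun b b' => ∑ c, ρ x (b, c) (b', c))).trace).re,
      ⟨G, hGpsd, hGsum, rfl⟩, ?_⟩
    have hterm : ∀ x, ((F x * ρ x).trace).re ≤ (2:ℝ) ^ (2 * ℓ) *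
        ((G x * (Matrix.of fun b b' => ∑ c, ρ x (b, c) (b', c))).trace).re := by
      intro x
      have htb := Stmt7.trace_bound (hF x) (hρ x)
      have hGx : ((G x * (Matrix.of fun b b' => ∑ c, ρ x (b, c) (b', c))).trace).re
          = (Fintype.card C : ℝ)⁻¹ * ((Stmt7.marg (F x) * Stmt7.marg (ρ x)).trace).re := by
        show ((((Fintype.card C : ℂ))⁻¹ • Stmt7.marg (F x) * Stmt7.marg (ρ x)).trace).re = _
        rw [Matrix.smul_mul, Matrix.trace_smul, smul_eq_mul, Stmt7.inv_cast_eq]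
        rw [Complex.re_ofReal_mul]
      rw [hGx]
      have h2 : (2:ℝ) ^ (2 * ℓ) = (Fintype.card C : ℝ) * (Fintype.card C : ℝ) := by
        rw [hdR, two_mul, pow_add]
      rw [h2]
      have : (Fintype.card C : ℝ) * (Fintype.card C : ℝ) *
          ((Fintype.card C : ℝ)⁻¹ * ((Stmt7.marg (F x) * Stmt7.marg (ρ x)).trace).re)
          = (Fintype.card C : ℝ) * ((Stmt7.marg (F x) * Stmt7.marg (ρ x)).trace).re := by
        field_simp
      rw [this]
      exact htb
    calc (∑ x, p x * ((F x * ρ x).trace).re)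
        ≤ ∑ x, p x * ((2:ℝ) ^ (2 * ℓ) *
            ((G x * (Matrix.of fun b b' => ∑ c, ρ x (b, c) (b', c))).trace).re) :=
          Finset.sum_le_sum fun x _ => mul_le_mul_of_nonneg_left (hterm x) (hp x)
      _ = (2:ℝ) ^ (2 * ℓ) * ∑ x, p x *
            ((G x * (Matrix.of fun b b' => ∑ c, ρ x (b, c) (b', c))).trace).re := by
          rw [Finset.mul_sum]
          exact Finset.sum_congr rfl fun x _ => by ring
  have pos1 : 0 < sSup S1 := lt_of_lt_of_le hnXR (le_csSup hbdd1 mem1)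
  have pos2 : 0 < sSup S2 := lt_of_lt_of_le hnXR (le_csSup hbdd2 mem2)
  have hmain : sSup S1 ≤ (2:ℝ) ^ (2 * ℓ) * sSup S2 := by
    refine csSup_le hne1 fun r hr => ?_
    obtain ⟨r', hr', hle⟩ := key4 r hr
    exact hle.trans (mul_le_mul_of_nonneg_left (le_csSup hbdd2 hr') (by positivity))
  have hlog := Real.logb_le_logb_of_le (b := 2) one_lt_two pos1 hmain
  rw [Real.logb_mul (by positivity) (ne_of_gt pos2), Real.logb_pow,
    Real.logb_self_eq_one one_lt_two] at hlog
  push_cast at hlog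
  linarith
end

section
/- (Approximate inner-product reconstruction lower bound.) With notation as in the exact case, suppose instead U(|0⟩|ψ_x⟩|y⟩|0⟩) = α_{x,y}|IP(x,y)⟩|G_{x,y}⟩ + β_{x,y}|1 ⊕ IP(x,y)⟩|B_{x,y}⟩ with |α_{x,y}|² + |β_{x,y}|² = 1, and define ε_x by E_y[|β_{x,y}|²] = 1/2 − ε_x (expectation over uniform y ∈ {0,1}^n). Then the reconstruction circuit (uniform superposition, apply the coherent guessing unitary, apply inverse, Hadamards, measure) outputs (1, x) with probability at least 4ε_x². -/
namespace Stmt11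

/-- Hilbert space of the registers (z, y, e, anc) on which the guessing unitary acts. -/
abbrev Hsp (n : ℕ) (E A : Type) := ZMod 2 × (Fin n → ZMod 2) × E × A → ℂ

/-- Hilbert space with the extra phase qubit a: registers (a, z, y, e, anc). -/
abbrev H2sp (n : ℕ) (E A : Type) := ZMod 2 × (ZMod 2 × (Fin n → ZMod 2) × E × A) → ℂ

variable {n : ℕ} {E A : Type} [Fintype E] [Fintype A] [DecidableEq E] [DecidableEq A]

/-- Binary inner product. -/
def ip (x y : Fin n → ZMod 2) : ZMod 2 := ∑ i, x i * y i

/-- |z⟩|y⟩ ⊗ φ with φ a joint state of the E and ancilla registers. -/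
def vecH (z : ZMod 2) (y : Fin n → ZMod 2) (φ : E × A → ℂ) : Hsp n E A :=
  fun q => (if q.1 = z then 1 else 0) * (if q.2.1 = y then 1 else 0) * φ (q.2.2.1, q.2.2.2)

/-- |z⟩|y⟩|ψ⟩|a₀⟩. -/
def tensorH (a0 : A) (z : ZMod 2) (y : Fin n → ZMod 2) (ψ : E → ℂ) : Hsp n E A :=
  vecH z y fun q => ψ q.1 * (if q.2 = a0 then 1 else 0)

/-- Lift an operator on the (z,y,e,anc) registers to the full space (identity on a). -/
def liftF (T : Hsp n E A → Hsp n E A) : H2sp n E A → H2sp n E A :=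
  fun f p => T (fun q => f (p.1, q)) p.2

/-- CNOT from the z register onto the phase qubit a. -/
def cnot (f : H2sp n E A) : H2sp n E A := fun p => f (p.1 + p.2.1, p.2)

/-- Hadamard gates on the a-qubit and the n qubits of the y register. -/
noncomputable def had2 (f : H2sp n E A) : H2sp n E A :=
  fun p => ((Real.sqrt (2 ^ (n + 1)) : ℝ) : ℂ)⁻¹ *
    ∑ b : ZMod 2, ∑ w : Fin n → ZMod 2,
      (-1 : ℂ) ^ ((p.1 * b + ∑ i, p.2.2.1 i * w i).val) *
        f (b, (p.2.1, w, p.2.2.2.1, p.2.2.2.2))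

/-- Initial state (1/√2^{n+1}) Σ_{a,y} (−1)^a |a⟩|0_z⟩|y⟩|ψ⟩|a₀⟩. -/
noncomputable def init2 (a0 : A) (ψ : E → ℂ) : H2sp n E A :=
  fun p => ((Real.sqrt (2 ^ (n + 1)) : ℝ) : ℂ)⁻¹ *
    ∑ a : ZMod 2, ∑ y : Fin n → ZMod 2,
      (-1 : ℂ) ^ a.val * (if p.1 = a then 1 else 0) * tensorH a0 0 y ψ p.2

section Aux
set_option linter.unusedSectionVars false

/-- (auxiliary) complex inner product on `Hsp`. -/
noncomputable def inH (f g : Hsp n E A) : ℂ := ∑ q, (starRingEnd ℂ) (f q) * g q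

lemma neg_one_add_val (u v : ZMod 2) : (-1:ℂ)^(u+v).val = (-1)^u.val * (-1)^v.val := by
  rw [ZMod.val_add, ← pow_add, ← neg_one_pow_eq_pow_mod_two]

lemma neg_one_sq_val (u : ZMod 2) : (-1:ℂ)^u.val * (-1)^u.val = 1 := by
  rw [← pow_add, ← two_mul, pow_mul]; norm_num

lemma zmod_ne_add_one (u : ZMod 2) : u ≠ u + 1 := by revert u; decide

lemma sum_zmod2 (f : ZMod 2 → ℂ) : ∑ b, f b = f 0 + f 1 := Fin.sum_univ_two f

lemma conj_mul_self (z : ℂ) : (starRingEnd ℂ) z * z = ((‖z‖ ^ 2 : ℝ) : ℂ) := by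
  rw [mul_comm, Complex.mul_conj]; norm_cast; rw [Complex.sq_norm]

lemma inH_smul_right (c : ℂ) (f g : Hsp n E A) : inH f (c • g) = c * inH f g := by
  unfold inH; rw [Finset.mul_sum]; apply Finset.sum_congr rfl; intro q _
  simp [Pi.smul_apply, smul_eq_mul]; ring

lemma inH_sub_right (f g h : Hsp n E A) : inH f (g - h) = inH f g - inH f h := by
  unfold inH; rw [← Finset.sum_sub_distrib]; apply Finset.sum_congr rfl; intro q _
  simp [mul_sub]

lemma inH_add_right (f g h : Hsp n E A) : inH f (g + h) = inH f g + inH f h := by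
  unfold inH; rw [← Finset.sum_add_distrib]; apply Finset.sum_congr rfl; intro q _
  simp [mul_add]

lemma inH_sum_left {ι : Type*} [Fintype ι] (g : Hsp n E A) (f : ι → Hsp n E A) :
    inH (∑ i, f i) g = ∑ i, inH (f i) g := by
  unfold inH; rw [Finset.sum_comm]; apply Finset.sum_congr rfl; intro q _
  simp [Finset.sum_apply, map_sum, Finset.sum_mul]

lemma inH_add_left (f g h : Hsp n E A) : inH (f + g) h = inH f h + inH g h := by
  unfold inH; rw [← Finset.sum_add_distrib]; apply Finset.sum_congr rfl; intro q _
  simp [add_mul]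

lemma inH_smul_left (c : ℂ) (f g : Hsp n E A) : inH (c • f) g = (starRingEnd ℂ) c * inH f g := by
  unfold inH; rw [Finset.mul_sum]; apply Finset.sum_congr rfl; intro q _
  simp [Pi.smul_apply, smul_eq_mul]; ring

lemma neg_pow_fst_vec (z : ZMod 2) (y : Fin n → ZMod 2) (φ : E × A → ℂ)
    (q : ZMod 2 × (Fin n → ZMod 2) × E × A) :
    (-1:ℂ)^(q.1.val) * vecH z y φ q = (-1:ℂ)^(z.val) * vecH z y φ q := by
  rcases eq_or_ne q.1 z with h | h
  · rw [h]
  · simp [vecH, h]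

lemma inH_vec (z z' : ZMod 2) (y y' : Fin n → ZMod 2) (φ φ' : E × A → ℂ) :
    inH (vecH z y φ) (vecH z' y' φ') =
      if z = z' ∧ y = y' then ∑ p : E × A, (starRingEnd ℂ) (φ p) * φ' p else 0 := by
  unfold inH vecH
  by_cases hz : z = z' <;> by_cases hy : y = y' <;>
    simp [hz, hy, Fintype.sum_prod_type, apply_ite (starRingEnd ℂ), mul_ite, ite_mul,
      Finset.sum_ite_eq', mul_comm, mul_assoc, mul_left_comm]
  intro h; exact absurd h.symm hy

lemma inH_tensor (a0 : A) (y y' : Fin n → ZMod 2) (ψ : E → ℂ) :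
    inH (tensorH a0 0 y ψ) (tensorH a0 0 y' ψ) =
      if y = y' then ∑ e, (starRingEnd ℂ) (ψ e) * ψ e else 0 := by
  unfold tensorH
  rw [inH_vec]
  by_cases hy : y = y'
  · simp only [hy, and_self, if_true, if_pos rfl, true_and]
    rw [Fintype.sum_prod_type]
    apply Finset.sum_congr rfl; intro e _
    simp [apply_ite (starRingEnd ℂ), mul_ite, ite_mul, Finset.sum_ite_eq']
  · simp [hy]

lemma inH_tensor_eval (a0 : A) (y : Fin n → ZMod 2) (ψ : E → ℂ) (T : Hsp n E A) :
    inH (tensorH a0 0 y ψ) T = ∑ e, (starRingEnd ℂ) (ψ e) * T (0, y, e, a0) := by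
  unfold inH tensorH vecH
  rw [Fintype.sum_prod_type]
  rw [Finset.sum_eq_single (0 : ZMod 2)]
  · rw [Fintype.sum_prod_type]
    rw [Finset.sum_eq_single y]
    · rw [Fintype.sum_prod_type]
      apply Finset.sum_congr rfl; intro e _
      rw [Finset.sum_eq_single a0] <;> simp +contextual
    · intro w _ hw; simp [hw]
    · simp
  · intro b _ hb; simp [hb]
  · simp

lemma expand_inH (a0 : A) (x : Fin n → ZMod 2) (ψ : E → ℂ) (T : Hsp n E A) :
    inH (∑ w, ((-1:ℂ)^((ip x w).val)) • tensorH a0 0 w ψ) T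
      = ∑ w, (-1:ℂ)^((ip x w).val) * ∑ e, (starRingEnd ℂ) (ψ e) * T (0, w, e, a0) := by
  rw [inH_sum_left]
  apply Finset.sum_congr rfl; intro w _
  rw [inH_smul_left, inH_tensor_eval]
  congr 1
  simp

end Aux

/-- approximate inner-product reconstruction lower bound: if the coherent
guessing unitary U₀ succeeds on |0⟩|y⟩|ψ_x⟩|0⟩ with good amplitude α_y and bad amplitude
β_y, and E_y[|β_y|²] = 1/2 − ε, then the reconstruction circuit
(Hadamards ∘ U₀† ∘ CNOT ∘ U₀ applied to the signed uniform superposition) outputs (1, x)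
on the first n+1 measured qubits with probability at least 4ε². -/
theorem stmt_11 (a0 : A) (x : Fin n → ZMod 2) (ψ : E → ℂ) (hψ : ∑ e, ‖ψ e‖ ^ 2 = 1)
    (U0 U0inv : Hsp n E A →ₗ[ℂ] Hsp n E A)
    (hiso : ∀ f g : Hsp n E A,
      (∑ q, (starRingEnd ℂ) (U0 f q) * U0 g q) = ∑ q, (starRingEnd ℂ) (f q) * g q)
    (hinv1 : ∀ f, U0inv (U0 f) = f) (hinv2 : ∀ f, U0 (U0inv f) = f)
    (α β : (Fin n → ZMod 2) → ℂ) (G B : (Fin n → ZMod 2) → E × A → ℂ)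
    (hG : ∀ y, ∑ q : E × A, ‖G y q‖ ^ 2 = 1) (hB : ∀ y, ∑ q : E × A, ‖B y q‖ ^ 2 = 1)
    (hαβ : ∀ y, ‖α y‖ ^ 2 + ‖β y‖ ^ 2 = 1)
    (hU0 : ∀ y, U0 (tensorH a0 0 y ψ) =
      α y • vecH (ip x y) y (G y) + β y • vecH (ip x y + 1) y (B y))
    (ε : ℝ) (hε : ((2 : ℝ) ^ n)⁻¹ * ∑ y : Fin n → ZMod 2, ‖β y‖ ^ 2 = 1 / 2 - ε) :
    4 * ε ^ 2 ≤
      ∑ z : ZMod 2, ∑ e : E, ∑ a : A,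
        ‖had2 (liftF (fun v => U0inv v)
            (cnot (liftF (fun v => U0 v) (init2 a0 ψ)))) (1, (z, x, e, a))‖ ^ 2 := by
  classical
  set c : ℂ := ((Real.sqrt (2 ^ (n + 1)) : ℝ) : ℂ)⁻¹ with hc
  set W : H2sp n E A :=
    liftF (fun v => U0inv v) (cnot (liftF (fun v => U0 v) (init2 a0 ψ))) with hWdef
  set F : H2sp n E A := had2 W with hFdef
  set R : (Fin n → ZMod 2) → Hsp n E A :=
    fun y => U0inv (vecH (ip x y + 1) y (B y)) with hRdef
  have hc2 : c * c = ((2:ℂ) ^ (n+1))⁻¹ := by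
    rw [hc, ← mul_inv, ← Complex.ofReal_mul,
      Real.mul_self_sqrt (by positivity)]
    push_cast
    ring
  have hψC : (∑ e, (starRingEnd ℂ) (ψ e) * ψ e) = 1 := by
    calc (∑ e, (starRingEnd ℂ) (ψ e) * ψ e) = ((∑ e, ‖ψ e‖^2 : ℝ) : ℂ) := by
          rw [Complex.ofReal_sum]; exact Finset.sum_congr rfl fun e _ => conj_mul_self _
      _ = 1 := by rw [hψ]; norm_num
  have hBC : ∀ y, (∑ p : E × A, (starRingEnd ℂ) (B y p) * B y p) = 1 := by
    intro y
    calc (∑ p : E × A, (starRingEnd ℂ) (B y p) * B y p)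
        = ((∑ p : E × A, ‖B y p‖^2 : ℝ) : ℂ) := by
          rw [Complex.ofReal_sum]; exact Finset.sum_congr rfl fun p _ => conj_mul_self _
      _ = 1 := by rw [hB]; norm_num
  have hinit : ∀ b' : ZMod 2, (fun q'' : ZMod 2 × (Fin n → ZMod 2) × E × A => init2 a0 ψ (b', q'')) =
      (c * (-1:ℂ)^b'.val) • ∑ y, tensorH a0 0 y ψ := by
    intro b'
    funext q''
    show ((Real.sqrt (2 ^ (n + 1)) : ℝ) : ℂ)⁻¹ *
        ∑ a : ZMod 2, ∑ y, (-1:ℂ)^a.val * (if b' = a then 1 else 0) * tensorH a0 0 y ψ q'' = _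
    rw [← hc]
    simp only [Pi.smul_apply, Finset.sum_apply, smul_eq_mul, mul_ite, ite_mul, mul_one,
      mul_zero, zero_mul, one_mul, Finset.sum_ite_irrel, Finset.sum_const_zero,
      Finset.sum_ite_eq, Finset.mem_univ, if_true]
    rw [Finset.mul_sum, Finset.mul_sum]
    apply Finset.sum_congr rfl; intro y _
    ring
  have hUα : ∀ y, α y • U0inv (vecH (ip x y) y (G y)) = tensorH a0 0 y ψ - β y • R y := by
    intro y
    have h := congrArg (fun v => U0inv v) (hU0 y)
    simp only [hinv1, map_add, map_smul] at h
    rw [h, hRdef]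
    abel
  have hW : ∀ (b : ZMod 2) (q : ZMod 2 × (Fin n → ZMod 2) × E × A), W (b, q) = c * (-1:ℂ)^b.val *
      ∑ y, (-1:ℂ)^((ip x y).val) * (tensorH a0 0 y ψ q - 2 * β y * R y q) := by
    intro b q
    have hstep : (fun q' : ZMod 2 × (Fin n → ZMod 2) × E × A =>
        U0 (fun q'' => init2 a0 ψ (b + q'.1, q'')) q')
        = (c * (-1:ℂ)^b.val) • ∑ y, ((-1:ℂ)^((ip x y).val) • (α y • vecH (ip x y) y (G y))
            - (-1:ℂ)^((ip x y).val) • (β y • vecH (ip x y + 1) y (B y))) := by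
      funext q'
      rw [hinit (b + q'.1), map_smul]
      simp only [Pi.smul_apply, smul_eq_mul, map_sum, Finset.sum_apply, hU0,
        Pi.add_apply, Pi.sub_apply, neg_one_add_val]
      simp only [Finset.mul_sum]
      apply Finset.sum_congr rfl; intro y _
      have h1 := neg_pow_fst_vec (E := E) (A := A) (ip x y) y (G y) q'
      have h2 := neg_pow_fst_vec (E := E) (A := A) (ip x y + 1) y (B y) q'
      rw [neg_one_add_val (ip x y) 1] at h2
      have hv1 : ((1 : ZMod 2)).val = 1 := rfl
      rw [hv1, pow_one] at h2
      linear_combination (c * (-1:ℂ)^b.val * α y) * h1 + (c * (-1:ℂ)^b.val * β y) * h2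
    have hWq : W (b, q) = ((c * (-1:ℂ)^b.val) •
        U0inv (∑ y, ((-1:ℂ)^((ip x y).val) • (α y • vecH (ip x y) y (G y))
          - (-1:ℂ)^((ip x y).val) • (β y • vecH (ip x y + 1) y (B y))))) q := by
      rw [hWdef]
      show U0inv (fun q' => U0 (fun q'' => init2 a0 ψ (b + q'.1, q'')) q') q = _
      rw [hstep, map_smul]
    rw [hWq]
    have h2 : U0inv (∑ y, ((-1:ℂ)^((ip x y).val) • (α y • vecH (ip x y) y (G y))
          - (-1:ℂ)^((ip x y).val) • (β y • vecH (ip x y + 1) y (B y))))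
        = ∑ y, ((-1:ℂ)^((ip x y).val) • (tensorH a0 0 y ψ - β y • R y)
          - (-1:ℂ)^((ip x y).val) • (β y • R y)) := by
      rw [map_sum]
      apply Finset.sum_congr rfl; intro y _
      rw [map_sub, map_smul, map_smul, map_smul, map_smul, hUα y, hRdef]
    rw [h2]
    simp only [Pi.smul_apply, Finset.sum_apply, smul_eq_mul, Pi.sub_apply, Finset.mul_sum]
    apply Finset.sum_congr rfl; intro y _
    ring
  set vGs : Hsp n E A := ∑ w, ((-1:ℂ)^((ip x w).val)) • tensorH a0 0 w ψ with hvGs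
  have hInv : ∀ f h, inH f (U0inv h) = inH (U0 f) h := by
    intro f h
    have h2 : inH (U0 f) (U0 (U0inv h)) = inH f (U0inv h) := hiso f (U0inv h)
    rw [hinv2] at h2; exact h2.symm
  have key0 : ∀ y, inH vGs (tensorH a0 0 y ψ) = (-1:ℂ)^((ip x y).val) := by
    intro y
    rw [hvGs, inH_sum_left]
    simp [inH_smul_left, inH_tensor, hψC, map_pow, map_neg, map_one, mul_ite, mul_one,
      mul_zero, Finset.sum_ite_eq', Finset.sum_ite_eq]
  have key1 : ∀ y, inH vGs (R y) = (-1:ℂ)^((ip x y).val) * (starRingEnd ℂ) (β y) := by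
    intro y
    rw [hvGs, inH_sum_left]
    have hterm : ∀ w, inH (((-1:ℂ)^((ip x w).val)) • tensorH a0 0 w ψ) (R y)
        = (-1:ℂ)^((ip x w).val) * (if w = y then (starRingEnd ℂ) (β y) else 0) := by
      intro w
      rw [inH_smul_left, hRdef, hInv, hU0 w, inH_add_left, inH_smul_left, inH_smul_left,
        inH_vec, inH_vec]
      by_cases hw : w = y
      · subst hw
        simp [zmod_ne_add_one (ip x w), hBC w, map_pow, map_neg, map_one]
      · simp [hw, map_pow, map_neg, map_one]
    simp only [hterm, mul_ite, mul_zero, Finset.sum_ite_eq', Finset.mem_univ, if_true]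
  have hFval : ∀ e, F (1, (0, x, e, a0)) = 2 * (c*c) *
      ∑ w, (-1:ℂ)^((ip x w).val) * ∑ y, (-1:ℂ)^((ip x y).val) *
        (tensorH a0 0 y ψ (0,w,e,a0) - 2 * β y * R y (0,w,e,a0)) := by
    intro e
    have h0 : F (1, (0, x, e, a0)) = c *
        ∑ b : ZMod 2, ∑ w, (-1:ℂ)^(((1:ZMod 2) * b + ∑ i, x i * w i).val) * W (b, (0, w, e, a0)) := rfl
    rw [h0]
    have h1 : ∀ (b : ZMod 2) (w : Fin n → ZMod 2),
        (-1:ℂ)^(((1:ZMod 2) * b + ∑ i, x i * w i).val) * W (b, (0, w, e, a0))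
        = c * ((-1:ℂ)^((ip x w).val) * ∑ y, (-1:ℂ)^((ip x y).val) *
            (tensorH a0 0 y ψ (0,w,e,a0) - 2 * β y * R y (0,w,e,a0))) := by
      intro b w
      rw [hW b (0,w,e,a0)]
      have he : ((1:ZMod 2) * b + ∑ i, x i * w i) = b + ip x w := by rw [one_mul]; rfl
      rw [he, neg_one_add_val]
      have hs := neg_one_sq_val b
      linear_combination (c * (-1:ℂ)^((ip x w).val) * ∑ y, (-1:ℂ)^((ip x y).val) *
        (tensorH a0 0 y ψ (0,w,e,a0) - 2 * β y * R y (0,w,e,a0))) * hs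
    simp only [h1]
    rw [sum_zmod2]
    rw [← Finset.mul_sum]
    ring
  set EXPR : E → (Fin n → ZMod 2) → (Fin n → ZMod 2) → ℂ := fun e w y =>
    (2*(c*c)) * ((-1:ℂ)^((ip x w).val) * ((-1:ℂ)^((ip x y).val) *
      ((starRingEnd ℂ) (ψ e) * (tensorH a0 0 y ψ (0,w,e,a0) - 2 * β y * R y (0,w,e,a0)))))
    with hEXPR
  have hS : (∑ e, (starRingEnd ℂ) (ψ e) * F (1, (0, x, e, a0))) = ((2*ε : ℝ) : ℂ) := by
    have l1 : (∑ e, (starRingEnd ℂ) (ψ e) * F (1, (0, x, e, a0)))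
        = ∑ e, ∑ w, ∑ y, EXPR e w y := by
      apply Finset.sum_congr rfl; intro e _
      rw [hFval e]
      simp only [Finset.mul_sum]
      apply Finset.sum_congr rfl; intro w _
      apply Finset.sum_congr rfl; intro y _
      simp only [hEXPR]
      ring
    have l2 : (∑ e, ∑ w, ∑ y, EXPR e w y) = ∑ y, ∑ w, ∑ e, EXPR e w y := by
      rw [Finset.sum_comm]
      have h' : (∑ w, ∑ e : E, ∑ y, EXPR e w y) = ∑ w, ∑ y, ∑ e, EXPR e w y := by
        apply Finset.sum_congr rfl; intro w _
        exact Finset.sum_comm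
      rw [h', Finset.sum_comm]
    have l3 : (∑ y, ∑ w, ∑ e, EXPR e w y)
        = 2*(c*c) * ∑ y, (-1:ℂ)^((ip x y).val) *
            (inH vGs (tensorH a0 0 y ψ) - 2 * β y * inH vGs (R y)) := by
      rw [Finset.mul_sum]
      apply Finset.sum_congr rfl; intro y _
      have e1 : inH vGs (tensorH a0 0 y ψ)
          = ∑ w, (-1:ℂ)^((ip x w).val) * ∑ e, (starRingEnd ℂ) (ψ e) *
              tensorH a0 0 y ψ (0, w, e, a0) := by
        rw [hvGs]; exact expand_inH a0 x ψ _
      have e2 : inH vGs (R y)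
          = ∑ w, (-1:ℂ)^((ip x w).val) * ∑ e, (starRingEnd ℂ) (ψ e) * R y (0, w, e, a0) := by
        rw [hvGs]; exact expand_inH a0 x ψ _
      rw [e1, e2]
      have inner : ∀ w, (∑ e, EXPR e w y) = 2*(c*c) * ((-1:ℂ)^((ip x y).val) *
          ((-1:ℂ)^((ip x w).val) *
            ((∑ e, (starRingEnd ℂ) (ψ e) * tensorH a0 0 y ψ (0,w,e,a0))
              - 2 * β y * (∑ e, (starRingEnd ℂ) (ψ e) * R y (0,w,e,a0))))) := by
        intro w
        rw [Finset.mul_sum Finset.univ (fun e => (starRingEnd ℂ) (ψ e) * R y (0,w,e,a0))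
          (2 * β y), ← Finset.sum_sub_distrib]
        rw [Finset.mul_sum, Finset.mul_sum, Finset.mul_sum]
        apply Finset.sum_congr rfl; intro e _
        simp only [hEXPR]
        ring
      simp only [inner]
      rw [Finset.mul_sum Finset.univ (fun w => (-1:ℂ)^((ip x w).val) *
          ∑ e, (starRingEnd ℂ) (ψ e) * R y (0,w,e,a0)) (2 * β y),
        ← Finset.sum_sub_distrib]
      rw [Finset.mul_sum, Finset.mul_sum]
      apply Finset.sum_congr rfl; intro w _
      ring
    have l4 : (∑ y, (-1:ℂ)^((ip x y).val) *
            (inH vGs (tensorH a0 0 y ψ) - 2 * β y * inH vGs (R y)))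
        = ∑ y : Fin n → ZMod 2, ((1:ℂ) - 2*((‖β y‖^2 : ℝ) : ℂ)) := by
      apply Finset.sum_congr rfl; intro y _
      rw [key0 y, key1 y]
      have h1 := neg_one_sq_val (ip x y)
      have h2 := conj_mul_self (β y)
      linear_combination (1 - 2 * β y * (starRingEnd ℂ) (β y)) * h1 - 2 * h2
    have l5 : (∑ y : Fin n → ZMod 2, ((1:ℂ) - 2*((‖β y‖^2 : ℝ) : ℂ)))
        = ((2:ℂ)^n) - 2 * ((∑ y, ‖β y‖^2 : ℝ) : ℂ) := by
      rw [Finset.sum_sub_distrib, Finset.sum_const, Finset.card_univ]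
      have hcard : Fintype.card (Fin n → ZMod 2) = 2 ^ n := by
        simp [Fintype.card_fun, ZMod.card]
      rw [hcard]
      push_cast
      rw [Finset.mul_sum]
      ring
    rw [l1, l2, l3, l4, l5]
    have h2c : 2*(c*c) = ((2:ℂ)^n)⁻¹ := by
      rw [hc2, pow_succ, mul_inv]; ring
    have hreal : (∑ y, ‖β y‖^2 : ℝ) = 2^n * (1/2 - ε) := by
      have h2 : ((2:ℝ)^n) ≠ 0 := by positivity
      rw [inv_mul_eq_div, div_eq_iff h2] at hε
      linarith
    rw [h2c, hreal]
    have h2n : ((2:ℂ)^n) ≠ 0 := pow_ne_zero _ two_ne_zero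
    push_cast
    field_simp
    ring
  -- final inequality
  have hcs1 : ‖((2*ε : ℝ) : ℂ)‖ ≤ ∑ e, ‖ψ e‖ * ‖F (1, (0, x, e, a0))‖ := by
    rw [← hS]
    refine (norm_sum_le _ _).trans ?_
    apply Finset.sum_le_sum; intro e _
    rw [norm_mul, RCLike.norm_conj]
  have hcs2 : (2*ε)^2 ≤ ∑ e, ‖F (1, (0, x, e, a0))‖^2 := by
    have h1 : ‖((2*ε : ℝ) : ℂ)‖^2 ≤ (∑ e, ‖ψ e‖ * ‖F (1, (0, x, e, a0))‖)^2 :=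
      pow_le_pow_left₀ (norm_nonneg _) hcs1 2
    have h2 := Finset.sum_mul_sq_le_sq_mul_sq Finset.univ (fun e => ‖ψ e‖)
      (fun e => ‖F (1, (0, x, e, a0))‖)
    calc (2*ε)^2 = ‖((2*ε : ℝ) : ℂ)‖^2 := by
          rw [Complex.norm_real, Real.norm_eq_abs, sq_abs]
      _ ≤ (∑ e, ‖ψ e‖ * ‖F (1, (0, x, e, a0))‖)^2 := h1
      _ ≤ (∑ e, ‖ψ e‖^2) * ∑ e, ‖F (1, (0, x, e, a0))‖^2 := h2
      _ = ∑ e, ‖F (1, (0, x, e, a0))‖^2 := by rw [hψ, one_mul]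
  calc 4*ε^2 = (2*ε)^2 := by ring
    _ ≤ ∑ e, ‖F (1, (0, x, e, a0))‖^2 := hcs2
    _ ≤ ∑ e, ∑ a, ‖F (1, (0, x, e, a))‖^2 := by
        apply Finset.sum_le_sum; intro e _
        exact Finset.single_le_sum (f := fun a => ‖F (1, (0, x, e, a))‖^2)
          (fun a _ => by positivity) (Finset.mem_univ a0)
    _ ≤ ∑ z, ∑ e, ∑ a, ‖F (1, (z, x, e, a))‖^2 :=
        Finset.single_le_sum (f := fun z => ∑ e, ∑ a, ‖F (1, (z, x, e, a))‖^2)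
          (fun z _ => by positivity) (Finset.mem_univ 0)

end Stmt11
end
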